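/- Upper bound construction for the removal lemma: For all positive integers C, Δ, n there exist a finite set U and a family (F_i)_{i∈ι} of subsets of U indexed by a finite set ι with |ι| = (C+1)^Δ · n and |F_i| = Δ for every i ∈ ι, such that for every ι' ⊆ ι and every U' ⊆ U satisfying F_i ∩ F_j ⊆ U' for all distinct i, j ∈ ι', one has |ι'| ≤ n + C·|U'|. -/

import Mathlib

lemma key_tree_lemma (C : ℕ) : ∀ (k : ℕ) (S : Finset (List (Fin (C+1))))
    (P : List (Fin (C+1)) → Prop),
    (∀ x ∈ S, x.length = k) →
    (∀ x ∈ S, ∀ y ∈ S, x ≠ y → ∀ d, d < k → List.take d x = List.take d y →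
      P (List.take d x)) →
    ∃ W : Finset (List (Fin (C+1))), (∀ v ∈ W, P v) ∧ S.card ≤ 1 + C * W.card := by
  classical
  intro k
  induction k with
  | zero =>
    intro S P hlen _
    refine ⟨∅, by simp, ?_⟩
    have : S.card ≤ 1 := Finset.card_le_one.mpr (by
      intro a ha b hb
      rw [List.length_eq_zero_iff.mp (hlen a ha), List.length_eq_zero_iff.mp (hlen b hb)])
    simpa using this
  | succ k ih =>
    intro S P hlen hP
    by_cases h1 : S.card ≤ 1
    · exact ⟨∅, by simp, by simpa using h1⟩
    push_neg at h1
    -- fibers by head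
    set Sa : Fin (C+1) → Finset (List (Fin (C+1))) :=
      fun a => (S.filter (fun x => x.head! = a)).image List.tail with hSa
    have hne : ∀ x ∈ S, x ≠ [] := by
      intro x hx h
      have := hlen x hx
      rw [h] at this
      simp at this
    have mem_Sa : ∀ a l, l ∈ Sa a ↔ (a :: l) ∈ S := by
      intro a l
      constructor
      · rintro hl
        obtain ⟨y, hy, rfl⟩ := Finset.mem_image.mp hl
        obtain ⟨hyS, hyh⟩ := Finset.mem_filter.mp hy
        have := List.cons_head!_tail (hne y hyS)
        rw [hyh] at this
        rwa [this]
      · intro h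
        exact Finset.mem_image.mpr ⟨a :: l, Finset.mem_filter.mpr ⟨h, rfl⟩, rfl⟩
    have hcardSa : ∀ a, (S.filter (fun x => x.head! = a)).card = (Sa a).card := by
      intro a
      rw [hSa]
      refine (Finset.card_image_of_injOn ?_).symm
      intro x hx y hy hxy
      obtain ⟨hxS, hxh⟩ := Finset.mem_filter.mp hx
      obtain ⟨hyS, hyh⟩ := Finset.mem_filter.mp hy
      rw [← List.cons_head!_tail (hne x hxS), ← List.cons_head!_tail (hne y hyS),
        hxh, hyh, hxy]
    have hfib : S.card = ∑ a : Fin (C+1), (S.filter (fun x => x.head! = a)).card :=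
      Finset.card_eq_sum_card_fiberwise (fun x _ => Finset.mem_univ _)
    -- apply ih to each fiber
    have hih : ∀ a : Fin (C+1), ∃ W : Finset (List (Fin (C+1))),
        (∀ v ∈ W, P (a :: v)) ∧ (Sa a).card ≤ 1 + C * W.card := by
      intro a
      refine ih (Sa a) (fun l => P (a :: l)) ?_ ?_
      · intro x hx
        have := hlen _ ((mem_Sa a x).mp hx)
        simpa using this
      · intro x hx y hy hxy d hd htake
        have hx' := (mem_Sa a x).mp hx
        have hy' := (mem_Sa a y).mp hy
        have hxy' : (a :: x) ≠ (a :: y) := by simpa using hxy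
        have := hP _ hx' _ hy' hxy' (d+1) (by omega) (by
          rw [List.take_succ_cons, List.take_succ_cons, htake])
        rwa [List.take_succ_cons] at this
    choose W hWP hWcard using hih
    by_cases hh : ∃ x ∈ S, ∃ y ∈ S, x.head! ≠ y.head!
    · -- at least two heads: root counted
      obtain ⟨x, hx, y, hy, hxyh⟩ := hh
      have hxy : x ≠ y := fun h => hxyh (by rw [h])
      have hP0 : P ([] : List (Fin (C+1))) := by
        have := hP x hx y hy hxy 0 (by omega) (by simp)
        simpa using this
      refine ⟨insert [] (Finset.univ.biUnion fun a => (W a).image (a :: ·)), ?_, ?_⟩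
      · intro v hv
        rcases Finset.mem_insert.mp hv with rfl | hv
        · exact hP0
        · obtain ⟨a, _, hv⟩ := Finset.mem_biUnion.mp hv
          obtain ⟨u, hu, rfl⟩ := Finset.mem_image.mp hv
          exact hWP a u hu
      · have hnotmem : ([] : List (Fin (C+1))) ∉
            Finset.univ.biUnion fun a => (W a).image (a :: ·) := by
          intro h
          obtain ⟨a, _, h⟩ := Finset.mem_biUnion.mp h
          obtain ⟨u, _, h⟩ := Finset.mem_image.mp h
          exact List.cons_ne_nil a u h
        rw [Finset.card_insert_of_notMem hnotmem, Finset.card_biUnion (by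
          intro a _ b _ hab
          rw [Function.onFun, Finset.disjoint_left]
          intro v hva hvb
          obtain ⟨u, _, rfl⟩ := Finset.mem_image.mp hva
          obtain ⟨u', _, h⟩ := Finset.mem_image.mp hvb
          exact hab (by injection h with h1 _; exact h1.symm))]
        simp only [Finset.card_image_of_injective _ (List.cons_injective)]
        have : S.card ≤ ∑ a : Fin (C+1), (1 + C * (W a).card) := by
          rw [hfib]
          refine Finset.sum_le_sum fun a _ => ?_
          rw [hcardSa a]; exact hWcard a
        calc S.card ≤ ∑ a : Fin (C+1), (1 + C * (W a).card) := this
          _ = (C + 1) + C * ∑ a : Fin (C+1), (W a).card := by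
              rw [Finset.sum_add_distrib, ← Finset.mul_sum]
              simp [Finset.card_univ]
          _ = 1 + C * ((∑ a : Fin (C+1), (W a).card) + 1) := by ring
    · -- all heads equal
      push_neg at hh
      have hSne : S.Nonempty := Finset.card_pos.mp (by omega)
      obtain ⟨x0, hx0⟩ := hSne
      set a := x0.head! with ha
      have hfilt : S.filter (fun x => x.head! = a) = S := by
        apply Finset.filter_true_of_mem
        intro x hx
        exact hh x hx x0 hx0
      refine ⟨(W a).image (a :: ·), ?_, ?_⟩
      · intro v hv
        obtain ⟨u, hu, rfl⟩ := Finset.mem_image.mp hv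
        exact hWP a u hu
      · rw [Finset.card_image_of_injective _ (List.cons_injective)]
        have : S.card = (Sa a).card := by rw [← hcardSa a, hfilt]
        rw [this]; exact hWcard a


/-- **Upper bound construction for the removal lemma.**
For all positive integers `C, Δ, n` there is a family of `(C+1)^Δ · n` sets
of size `Δ` (subsets of the finite universe `U`, here realized as finite
subsets of `ℕ`) such that every sub-family `ι'` that becomes pairwise disjoint
after removing a set `U'` of universe elements satisfies `|ι'| ≤ n + C·|U'|`. -/
theorem removal_lemma_upper_bound (C Δ n : ℕ) (hC : 0 < C) (hΔ : 0 < Δ) (hn : 0 < n) :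
    ∃ F : Fin ((C + 1) ^ Δ * n) → Finset ℕ,
      (∀ i, (F i).card = Δ) ∧
      ∀ (ι' : Finset (Fin ((C + 1) ^ Δ * n))) (U' : Finset ℕ),
        (∀ i ∈ ι', ∀ j ∈ ι', i ≠ j → F i ∩ F j ⊆ U') →
        ι'.card ≤ n + C * U'.card := by
  classical
  set e : Fin ((C+1)^Δ * n) ≃ (Fin Δ → Fin (C+1)) × Fin n :=
    finProdFinEquiv.symm.trans (Equiv.prodCongr finFunctionFinEquiv.symm (Equiv.refl _))
    with he
  set enc : Fin n → List (Fin (C+1)) → ℕ :=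
    fun t v => Nat.pair (t : ℕ) (Encodable.encode v) with henc
  refine ⟨fun i => (Finset.range Δ).image
    (fun d => enc (e i).2 ((List.ofFn (e i).1).take d)), ?_, ?_⟩
  · intro i
    rw [Finset.card_image_of_injOn, Finset.card_range]
    intro d hd d' hd' hdd
    simp only [henc, Nat.pair_eq_pair] at hdd
    have := Encodable.encode_injective hdd.2
    have h1 : ((List.ofFn (e i).1).take d).length = ((List.ofFn (e i).1).take d').length := by
      rw [this]
    simp only [List.length_take, List.length_ofFn] at h1
    simp only [Finset.mem_coe, Finset.mem_range] at hd hd'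
    omega
  · intro ι' U' hyp
    set S : Fin n → Finset (List (Fin (C+1))) :=
      fun t => (ι'.filter (fun i => (e i).2 = t)).image (fun i => List.ofFn (e i).1) with hS
    have hfib : ι'.card = ∑ t : Fin n, (ι'.filter (fun i => (e i).2 = t)).card :=
      Finset.card_eq_sum_card_fiberwise (fun x _ => Finset.mem_univ _)
    have hcardS : ∀ t, (ι'.filter (fun i => (e i).2 = t)).card = (S t).card := by
      intro t
      refine (Finset.card_image_of_injOn ?_).symm
      intro i hi j hj hij
      obtain ⟨_, hit⟩ := Finset.mem_filter.mp hi
      obtain ⟨_, hjt⟩ := Finset.mem_filter.mp hj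
      have h1 : (e i).1 = (e j).1 := List.ofFn_injective hij
      have : e i = e j := Prod.ext h1 (hit.trans hjt.symm)
      exact e.injective this
    have hkey : ∀ t : Fin n, ∃ W : Finset (List (Fin (C+1))),
        (∀ v ∈ W, enc t v ∈ U') ∧ (S t).card ≤ 1 + C * W.card := by
      intro t
      refine key_tree_lemma C Δ (S t) (fun v => enc t v ∈ U') ?_ ?_
      · intro x hx
        obtain ⟨i, _, rfl⟩ := Finset.mem_image.mp hx
        simp
      · intro x hx y hy hxy d hd htake
        obtain ⟨i, hi, rfl⟩ := Finset.mem_image.mp hx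
        obtain ⟨j, hj, rfl⟩ := Finset.mem_image.mp hy
        obtain ⟨hiι, hit⟩ := Finset.mem_filter.mp hi
        obtain ⟨hjι, hjt⟩ := Finset.mem_filter.mp hj
        have hij : i ≠ j := fun h => hxy (by rw [h])
        refine hyp i hiι j hjι hij (Finset.mem_inter.mpr ⟨?_, ?_⟩)
        · rw [← hit]
          exact Finset.mem_image.mpr ⟨d, Finset.mem_range.mpr hd, rfl⟩
        · rw [← hjt]
          exact Finset.mem_image.mpr ⟨d, Finset.mem_range.mpr hd, by rw [← htake]⟩
    choose W hWP hWcard using hkey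
    have hsum : ∑ t : Fin n, (W t).card ≤ U'.card := by
      have hTsub : (Finset.univ.biUnion fun t : Fin n => (W t).image (enc t)) ⊆ U' := by
        intro v hv
        obtain ⟨t, _, hv⟩ := Finset.mem_biUnion.mp hv
        obtain ⟨u, hu, rfl⟩ := Finset.mem_image.mp hv
        exact hWP t u hu
      have hTcard : (Finset.univ.biUnion fun t : Fin n => (W t).image (enc t)).card
          = ∑ t : Fin n, (W t).card := by
        rw [Finset.card_biUnion]
        · refine Finset.sum_congr rfl fun t _ => ?_
          refine Finset.card_image_of_injective _ ?_
          intro u v huv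
          simp only [henc, Nat.pair_eq_pair] at huv
          exact Encodable.encode_injective huv.2
        · intro a _ b _ hab
          rw [Function.onFun, Finset.disjoint_left]
          intro v hva hvb
          obtain ⟨u, _, rfl⟩ := Finset.mem_image.mp hva
          obtain ⟨u', _, h⟩ := Finset.mem_image.mp hvb
          simp only [henc, Nat.pair_eq_pair] at h
          exact hab (Fin.val_injective h.1.symm)
      rw [← hTcard]
      exact Finset.card_le_card hTsub
    calc ι'.card = ∑ t : Fin n, (S t).card := by
          rw [hfib]; exact Finset.sum_congr rfl fun t _ => hcardS t
      _ ≤ ∑ t : Fin n, (1 + C * (W t).card) := Finset.sum_le_sum fun t _ => hWcard t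
      _ = n + C * ∑ t : Fin n, (W t).card := by
          rw [Finset.sum_add_distrib, ← Finset.mul_sum]
          simp [Finset.card_univ]
      _ ≤ n + C * U'.card := by
          have := Nat.mul_le_mul_left C hsum; omega
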